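/- Let n ≥ 1 and l ∈ {1,…,n}. Let π be a uniformly random permutation of {1,…,n}, set N = π^{-1}(l) and G = #{1 ≤ i < N : π(i) < l}. Then for all integers i, j ≥ 0 with i ≤ l−1, j ≤ n−l and i + j ≤ n−1: P(G = i and N − 1 − G = j) = (1/n) · C(i+j, i) · C(n−1−i−j, l−1−i) / C(n−1, l−1). -/

import Mathlib

open MeasureTheory ProbabilityTheory Finset Filter
open scoped ENNReal NNReal

noncomputable section

/-- The `k`-th harmonic number `H_k = ∑_{i=1}^k 1/i`, with `H_0 = 0`. -/
def harm (k : ℕ) : ℝ := ∑ i ∈ Finset.range k, (1 : ℝ) / (i + 1)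

instance (n : ℕ) : MeasurableSpace (Equiv.Perm (Fin n)) := ⊤

/-- The uniform distribution on the permutations of `{1,…,n}`. -/
def uniformPerm (n : ℕ) : Measure (Equiv.Perm (Fin n)) :=
  (PMF.uniformOfFintype (Equiv.Perm (Fin n))).toMeasure

/-- The (1-based) position `N = π⁻¹(l)` of the key `l` in the permutation `π`
(positions are `i+1` for `i : Fin n`, values are `π i + 1`). -/
def bstN (n l : ℕ) (π : Equiv.Perm (Fin n)) : ℕ :=
  1 + ∑ i : Fin n, if (π i : ℕ) + 1 = l then (i : ℕ) else 0

open scoped Classical in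
/-- `R₋`: the number of ascending records in the subpermutation of values `< l`
appearing before the position of `l`. -/
def bstRminus (n l : ℕ) (π : Equiv.Perm (Fin n)) : ℕ :=
  (Finset.univ.filter fun r : Fin n =>
    (r : ℕ) + 1 < bstN n l π ∧ (π r : ℕ) + 1 < l ∧
      ∀ k : Fin n, k < r → (π k : ℕ) + 1 < l → π k < π r).card

open scoped Classical in
/-- `R₊`: the number of descending records in the subpermutation of values `> l`
appearing before the position of `l`. -/
def bstRplus (n l : ℕ) (π : Equiv.Perm (Fin n)) : ℕ :=
  (Finset.univ.filter fun r : Fin n =>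
    (r : ℕ) + 1 < bstN n l π ∧ (π r : ℕ) + 1 > l ∧
      ∀ k : Fin n, k < r → (π k : ℕ) + 1 > l → π r < π k).card

/-- `X_{n,l} = R₋ + R₊`: the depth of the node containing `l` in the binary search
tree built from the permutation `π` of `{1,…,n}`. -/
def bstDepth (n l : ℕ) (π : Equiv.Perm (Fin n)) : ℕ :=
  bstRminus n l π + bstRplus n l π

open scoped Classical in
/-- `G = #{1 ≤ i < N : π(i) < l}`. -/
def bstG (n l : ℕ) (π : Equiv.Perm (Fin n)) : ℕ :=
  (Finset.univ.filter fun i : Fin n =>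
    (i : ℕ) + 1 < bstN n l π ∧ (π i : ℕ) + 1 < l).card

/-- The expectation `E X_{n,l}` of the depth of the node containing `l`. -/
def bstExp (n l : ℕ) : ℝ := ∫ π, (bstDepth n l π : ℝ) ∂(uniformPerm n)

/-- The hypergeometric probability mass function: for `X ~ HypGeo(N; M, n)`,
`P(X = k) = C(M,k)·C(N−M,n−k)/C(N,n)` for `0 ≤ k ≤ n` (and `0` otherwise). -/
def hypPMF (N M n k : ℕ) : ℝ :=
  if k ≤ n then (M.choose k * (N - M).choose (n - k) : ℝ) / (N.choose n) else 0

/-- Total variation distance between (probability) measures on `ℕ`. -/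
def dTV (μ ν : Measure ℕ) : ℝ := ⨆ A : Set ℕ, |(μ A).toReal - (ν A).toReal|

/-- The Wasserstein-type distance `d_W` of Barbour–Holst–Janson: the supremum of
`|∫ f dμ − ∫ f dν|` over measurable `f` with `|f(x) − f(y)| ≤ 1` whenever `|x − y| ≤ 1`. -/
def dW (μ ν : Measure ℝ) : ℝ :=
  sSup { d : ℝ | ∃ f : ℝ → ℝ, Measurable f ∧ (∀ x y, |x - y| ≤ 1 → |f x - f y| ≤ 1) ∧
    d = |∫ x, f x ∂μ - ∫ x, f x ∂ν| }

/-- The mixed Poisson distribution with mixing measure `ν`: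
`MixPo(ν)({k}) = ∫ e^{−λ} λ^k / k! ν(dλ)`. -/
def mixPo (ν : Measure ℝ) : Measure ℕ :=
  Measure.sum fun k =>
    (∫⁻ l, ENNReal.ofReal (Real.exp (-l) * l ^ k / k.factorial) ∂ν) • Measure.dirac k

/-- The standard normal cumulative distribution function `Φ`. -/
def stdNormalCDF (x : ℝ) : ℝ :=
  (1 / Real.sqrt (2 * Real.pi)) * ∫ y in Set.Iic x, Real.exp (-y ^ 2 / 2)

end

section Helpers
open Finset

lemma card_val_lt (n m : ℕ) (h : m ≤ n) :
    ((univ : Finset (Fin n)).filter fun v : Fin n => (v:ℕ) < m).card = m := by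
  rw [Finset.card_nbij (fun v : Fin n => (v:ℕ)) (t := Finset.range m)
    (by intro a ha; simp at ha ⊢; omega)
    (by intro a _ b _ hab; exact Fin.val_inj.mp hab)
    (by intro c hc; simp at hc ⊢; exact ⟨⟨c, by omega⟩, hc, rfl⟩),
    Finset.card_range]

lemma card_val_gt (n m : ℕ) :
    ((univ : Finset (Fin n)).filter fun v : Fin n => m < (v:ℕ)).card = n - m - 1 := by
  rw [Finset.card_nbij (fun v : Fin n => (v:ℕ) - m - 1) (t := Finset.range (n - m - 1))
    (by intro a ha; simp at ha ⊢; omega)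
    (by intro a ha b hb hab; simp at ha hb; exact Fin.val_inj.mp (by simp at hab; omega))
    (by intro c hc; simp at hc ⊢; refine ⟨⟨c + m + 1, by omega⟩, by simp, by simp; omega⟩),
    Finset.card_range]

lemma bstN_eq {n : ℕ} (l0 : Fin n) (π : Equiv.Perm (Fin n)) :
    bstN n ((l0 : ℕ) + 1) π = (π.symm l0 : ℕ) + 1 := by
  unfold bstN
  have h : ∀ i : Fin n, (if (π i : ℕ) + 1 = (l0 : ℕ) + 1 then (i : ℕ) else 0)
      = (if i = π.symm l0 then (i : ℕ) else 0) := by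
    intro i
    apply if_congr _ rfl rfl
    constructor
    · intro h
      have h2 : π i = l0 := Fin.val_inj.mp (by omega)
      rw [← h2, Equiv.symm_apply_apply]
    · intro h; subst h; simp
  rw [Finset.sum_congr rfl (fun i _ => h i), Finset.sum_ite_eq' univ (π.symm l0)]
  simp [Nat.add_comm]

open scoped Classical in
lemma uniformPerm_apply_toReal {n : ℕ} (s : Finset (Equiv.Perm (Fin n))) :
    ((uniformPerm n) ↑s).toReal = (s.card : ℝ) / (n.factorial : ℝ) := by
  rw [uniformPerm, PMF.toMeasure_apply _ MeasurableSpace.measurableSet_top, tsum_fintype]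
  simp only [Set.indicator_apply, Finset.mem_coe, PMF.uniformOfFintype_apply]
  rw [← Finset.sum_filter, Finset.filter_univ_mem, Finset.sum_const, nsmul_eq_mul]
  rw [ENNReal.toReal_mul, ENNReal.toReal_inv]
  simp [Fintype.card_perm, div_eq_mul_inv]

def buildPerm {n : ℕ} (l0 p0 : Fin n) (A : Finset (Fin n)) (hp : p0 ∉ A)
    (e : {a : Fin n // a ∈ A} ≃ {v : Fin n // (v : ℕ) < (l0 : ℕ)})
    (f : {b : Fin n // b ∉ A ∧ b ≠ p0} ≃ {v : Fin n // (l0 : ℕ) < (v : ℕ)}) :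
    Equiv.Perm (Fin n) where
  toFun k :=
    if h : k ∈ A then (e ⟨k, h⟩ : Fin n)
    else if h2 : k = p0 then l0
    else (f ⟨k, h, h2⟩ : Fin n)
  invFun v :=
    if h : (v : ℕ) < (l0 : ℕ) then (e.symm ⟨v, h⟩ : Fin n)
    else if h2 : v = l0 then p0
    else (f.symm ⟨v, Nat.lt_of_le_of_ne (Nat.not_lt.mp h)
      (fun hv => h2 (Fin.val_inj.mp hv.symm))⟩ : Fin n)
  left_inv := by
    intro k
    by_cases h : k ∈ A
    · simp only [dif_pos h, (e ⟨k, h⟩).2, dite_true, dif_pos]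
      simp
    · by_cases h2 : k = p0
      · simp only [dif_neg h, dif_pos h2]
        simp [h2]
      · simp only [dif_neg h, dif_neg h2]
        have hgt := (f ⟨k, h, h2⟩).2
        rw [dif_neg (by omega), dif_neg (fun hv => by rw [hv] at hgt; omega)]
        simp
  right_inv := by
    intro v
    by_cases h : (v : ℕ) < (l0 : ℕ)
    · simp only [dif_pos h, (e.symm ⟨v, h⟩).2, dite_true, dif_pos]
      simp
    · by_cases h2 : v = l0
      · simp only [dif_neg h, dif_pos h2, dif_neg hp]
        simp [h2]
      · simp only [dif_neg h, dif_neg h2]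
        rw [dif_neg (f.symm _).2.1, dif_neg (f.symm _).2.2]
        simp

lemma buildPerm_p0 {n : ℕ} (l0 p0 : Fin n) (A : Finset (Fin n)) (hp : p0 ∉ A) (e f) :
    buildPerm l0 p0 A hp e f p0 = l0 := by
  show (if h : p0 ∈ A then _ else if h2 : p0 = p0 then l0 else _) = l0
  rw [dif_neg hp, dif_pos rfl]

lemma buildPerm_small {n : ℕ} (l0 p0 : Fin n) (A : Finset (Fin n)) (hp : p0 ∉ A) (e f) :
    ∀ k, ((buildPerm l0 p0 A hp e f k : Fin n) : ℕ) < (l0 : ℕ) ↔ k ∈ A := by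
  intro k
  show ((if h : k ∈ A then _ else if h2 : k = p0 then l0 else (f ⟨k, h, h2⟩ : Fin n)) : Fin n).val < (l0:ℕ) ↔ _
  by_cases h : k ∈ A
  · rw [dif_pos h]; exact ⟨fun _ => h, fun _ => (e ⟨k, h⟩).2⟩
  · rw [dif_neg h]
    by_cases h2 : k = p0
    · rw [dif_pos h2]; simp [h]
    · rw [dif_neg h2]
      have := (f ⟨k, h, h2⟩).2
      constructor
      · intro hlt; omega
      · intro hk; exact absurd hk h

open scoped Classical in
lemma card_fiber {n : ℕ} (l0 p0 : Fin n) (A : Finset (Fin n))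
    (hA : A.card = (l0 : ℕ)) (hp : p0 ∉ A) :
    ((univ : Finset (Equiv.Perm (Fin n))).filter fun π =>
        π p0 = l0 ∧ ∀ k, ((π k : Fin n) : ℕ) < (l0 : ℕ) ↔ k ∈ A).card
      = ((l0 : ℕ).factorial * (n - (l0 : ℕ) - 1).factorial) := by
  rw [← Fintype.card_subtype]
  have hcard1 : Fintype.card {a : Fin n // a ∈ A} = Fintype.card {v : Fin n // (v : ℕ) < (l0 : ℕ)} := by
    rw [Fintype.card_coe, hA, Fintype.card_subtype, card_val_lt n _ (le_of_lt l0.2)]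
  have hBcard : ((univ : Finset (Fin n)).filter fun b : Fin n => b ∉ A ∧ b ≠ p0).card
      = n - (l0 : ℕ) - 1 := by
    rw [Finset.card_nbij id (t := univ \ insert p0 A)
      (by intro a ha; simp at ha ⊢; tauto)
      (by intro a _ b _ hab; exact hab)
      (by intro c hc; simp at hc ⊢; tauto)]
    rw [Finset.card_sdiff_of_subset (subset_univ _), Finset.card_insert_of_notMem hp, hA,
      Finset.card_univ, Fintype.card_fin]
    omega
  have hcard2 : Fintype.card {b : Fin n // b ∉ A ∧ b ≠ p0}
      = Fintype.card {v : Fin n // (l0 : ℕ) < (v : ℕ)} := by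
    rw [Fintype.card_subtype, Fintype.card_subtype, card_val_gt n, hBcard]
  have E : {π : Equiv.Perm (Fin n) // π p0 = l0 ∧ ∀ k, ((π k : Fin n) : ℕ) < (l0 : ℕ) ↔ k ∈ A}
      ≃ ({a : Fin n // a ∈ A} ≃ {v : Fin n // (v : ℕ) < (l0 : ℕ)})
        × ({b : Fin n // b ∉ A ∧ b ≠ p0} ≃ {v : Fin n // (l0 : ℕ) < (v : ℕ)}) := by
    refine
      { toFun := fun πh =>
          (Equiv.subtypeEquiv πh.1 (fun a => (πh.2.2 a).symm),
           Equiv.subtypeEquiv πh.1 (fun b => ?_)),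
        invFun := fun ef => ⟨buildPerm l0 p0 A hp ef.1 ef.2,
          buildPerm_p0 l0 p0 A hp ef.1 ef.2, buildPerm_small l0 p0 A hp ef.1 ef.2⟩,
        left_inv := ?_, right_inv := ?_ }
    · constructor
      · rintro ⟨hbA, hbp⟩
        have hne : πh.1 b ≠ l0 := fun hv => hbp (πh.1.injective (hv.trans πh.2.1.symm))
        have hnlt : ¬ ((πh.1 b : Fin n) : ℕ) < (l0 : ℕ) := fun hlt => hbA ((πh.2.2 b).mp hlt)
        exact Nat.lt_of_le_of_ne (Nat.not_lt.mp hnlt) (fun hv => hne (Fin.val_inj.mp hv.symm))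
      · intro hgt
        refine ⟨fun hbA => ?_, fun hbp => ?_⟩
        · have := (πh.2.2 b).mpr hbA; omega
        · rw [hbp, πh.2.1] at hgt; omega
    · rintro ⟨π, h1, h2⟩
      apply Subtype.ext
      apply Equiv.ext
      intro k
      show buildPerm l0 p0 A hp _ _ k = π k
      by_cases h : k ∈ A
      · show (if h' : k ∈ A then _ else _) = π k
        rw [dif_pos h]
        rfl
      · by_cases hk : k = p0
        · show (if h' : k ∈ A then _ else if _ : k = p0 then l0 else _) = π k
          rw [dif_neg h, dif_pos hk, hk, h1]
        · show (if h' : k ∈ A then _ else if _ : k = p0 then l0 else _) = π k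
          rw [dif_neg h, dif_neg hk]
          rfl
    · rintro ⟨e, f⟩
      refine Prod.ext ?_ ?_ <;> apply Equiv.ext <;> intro a <;> apply Subtype.ext
      · show ((buildPerm l0 p0 A hp e f) (a : Fin n) : Fin n) = (e a : Fin n)
        show (if h : (a : Fin n) ∈ A then ((e ⟨a, h⟩ : _) : Fin n) else _) = _
        rw [dif_pos a.2]
      · show ((buildPerm l0 p0 A hp e f) (a : Fin n) : Fin n) = (f a : Fin n)
        show (if h : (a : Fin n) ∈ A then _ else if h2 : (a : Fin n) = p0 then l0
          else ((f ⟨a, h, h2⟩ : _) : Fin n)) = _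
        rw [dif_neg a.2.1, dif_neg a.2.2]
  rw [Fintype.card_congr E, Fintype.card_prod,
    Fintype.card_equiv (Fintype.equivOfCardEq hcard1),
    Fintype.card_equiv (Fintype.equivOfCardEq hcard2),
    Fintype.card_coe, hA, Fintype.card_subtype, hBcard]

end Helpers

theorem joint_distribution_G_N (n l : ℕ) (hn : 1 ≤ n) (hl : l ∈ Finset.Icc 1 n)
    (i j : ℕ) (hi : i ≤ l - 1) (hj : j ≤ n - l) (hij : i + j ≤ n - 1) :
    ((uniformPerm n) {π | bstG n l π = i ∧ bstN n l π - 1 - bstG n l π = j}).toReal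
      = (1 / (n : ℝ)) * (((i + j).choose i : ℝ) * ((n - 1 - i - j).choose (l - 1 - i)))
          / ((n - 1).choose (l - 1)) := by
  classical
  rw [Finset.mem_Icc] at hl
  obtain ⟨hl1, hln⟩ := hl
  have hl0n : l - 1 < n := by omega
  have hp0n : i + j < n := by omega
  set l0 : Fin n := ⟨l - 1, hl0n⟩ with hl0def
  set p0 : Fin n := ⟨i + j, hp0n⟩ with hp0def
  have hl0v : (l0 : ℕ) = l - 1 := rfl
  have hp0v : (p0 : ℕ) = i + j := rfl
  have hN : ∀ π : Equiv.Perm (Fin n), bstN n l π = (π.symm l0 : ℕ) + 1 := by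
    intro π
    have h := bstN_eq l0 π
    rwa [show (l0 : ℕ) + 1 = l by omega] at h
  have hGle : ∀ π : Equiv.Perm (Fin n), bstG n l π ≤ (π.symm l0 : ℕ) := by
    intro π
    unfold bstG
    calc ((univ : Finset (Fin n)).filter fun k : Fin n =>
            (k:ℕ)+1 < bstN n l π ∧ (π k : ℕ)+1 < l).card
        ≤ ((univ : Finset (Fin n)).filter fun k : Fin n => (k:ℕ) < (π.symm l0 : ℕ)).card := by
          apply Finset.card_le_card
          intro k hk
          simp only [Finset.mem_filter] at hk ⊢
          refine ⟨hk.1, ?_⟩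
          have h2 := hk.2.1
          rw [hN π] at h2
          omega
      _ = (π.symm l0 : ℕ) := card_val_lt n _ (le_of_lt (π.symm l0).2)
  have hGval : ∀ π : Equiv.Perm (Fin n), π.symm l0 = p0 →
      bstG n l π = ((univ : Finset (Fin n)).filter fun k : Fin n =>
        (k:ℕ) < i + j ∧ ((π k : Fin n):ℕ) < l - 1).card := by
    intro π hπ
    unfold bstG
    apply Finset.card_nbij id (by
        intro k hk
        simp only [Finset.mem_coe, Finset.mem_filter, id] at hk ⊢
        have h2 := hk.2.1
        rw [hN π, hπ] at h2
        exact ⟨hk.1, by omega, by omega⟩)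
      (fun a _ b _ hab => hab)
      (by
        intro k hk
        simp only [Finset.coe_filter, Set.mem_setOf_eq, Set.mem_image] at hk ⊢
        refine ⟨k, ⟨hk.1, ?_, ?_⟩, rfl⟩
        · rw [hN π, hπ]; omega
        · omega)
  have hset : {π : Equiv.Perm (Fin n) | bstG n l π = i ∧ bstN n l π - 1 - bstG n l π = j}
      = {π : Equiv.Perm (Fin n) | π p0 = l0 ∧ ((univ : Finset (Fin n)).filter fun k : Fin n =>
          (k:ℕ) < i + j ∧ ((π k : Fin n):ℕ) < l - 1).card = i} := by
    ext π
    simp only [Set.mem_setOf_eq]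
    constructor
    · rintro ⟨hG, hNG⟩
      have h1 := hGle π
      rw [hN π, hG] at hNG
      have hsymm : (π.symm l0 : ℕ) = i + j := by omega
      have hsymm' : π.symm l0 = p0 := Fin.val_inj.mp (by rw [hsymm, hp0v])
      refine ⟨?_, ?_⟩
      · rw [← hsymm']; exact Equiv.apply_symm_apply π l0
      · rw [← hGval π hsymm', hG]
    · rintro ⟨hp, hcard⟩
      have hsymm' : π.symm l0 = p0 := by rw [← hp, Equiv.symm_apply_apply]
      have hGi : bstG n l π = i := by rw [hGval π hsymm', hcard]
      have hsv : (π.symm l0 : ℕ) = i + j := by rw [hsymm']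
      refine ⟨hGi, ?_⟩
      rw [hN π, hGi, hsv]
      omega
  have hcoe : {π : Equiv.Perm (Fin n) | π p0 = l0 ∧ ((univ : Finset (Fin n)).filter fun k : Fin n =>
          (k:ℕ) < i + j ∧ ((π k : Fin n):ℕ) < l - 1).card = i}
      = ↑((univ : Finset (Equiv.Perm (Fin n))).filter fun π =>
        π p0 = l0 ∧ ((univ : Finset (Fin n)).filter fun k : Fin n =>
          (k:ℕ) < i + j ∧ ((π k : Fin n):ℕ) < l - 1).card = i) := by
    ext π
    simp [Set.mem_setOf_eq]
  rw [hset, hcoe, uniformPerm_apply_toReal]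
  -- now count
  set F : Equiv.Perm (Fin n) → Finset (Fin n) :=
    fun π => (univ : Finset (Fin n)).filter fun k : Fin n => ((π k : Fin n):ℕ) < l - 1 with hF
  set 𝒜 := (univ : Finset (Finset (Fin n))).filter (fun A => A.card = l - 1 ∧ p0 ∉ A ∧
      (A.filter fun k : Fin n => (k:ℕ) < i + j).card = i) with h𝒜
  have hmap : ∀ π ∈ ((univ : Finset (Equiv.Perm (Fin n))).filter fun π =>
      π p0 = l0 ∧ ((univ : Finset (Fin n)).filter fun k : Fin n =>
        (k:ℕ) < i + j ∧ ((π k : Fin n):ℕ) < l - 1).card = i), F π ∈ 𝒜 := by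
    intro π hπ
    simp only [Finset.mem_filter, Finset.mem_univ, true_and] at hπ
    obtain ⟨hp, hcard⟩ := hπ
    simp only [h𝒜, Finset.mem_filter, Finset.mem_univ, true_and]
    refine ⟨?_, ?_, ?_⟩
    · have himg : F π = Finset.image (π.symm)
          ((univ : Finset (Fin n)).filter fun v : Fin n => (v:ℕ) < l - 1) := by
        ext k
        simp only [hF, Finset.mem_filter, Finset.mem_univ, true_and, Finset.mem_image]
        constructor
        · intro hk
          exact ⟨π k, hk, Equiv.symm_apply_apply π k⟩
        · rintro ⟨v, hv, rfl⟩
          rwa [Equiv.apply_symm_apply]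
      rw [himg, Finset.card_image_of_injective _ π.symm.injective,
        card_val_lt n _ (by omega)]
    · simp only [hF, Finset.mem_filter, Finset.mem_univ, true_and, hp, hl0v]
      omega
    · rw [show (F π).filter (fun k : Fin n => (k:ℕ) < i + j)
          = ((univ : Finset (Fin n)).filter fun k : Fin n =>
            (k:ℕ) < i + j ∧ ((π k : Fin n):ℕ) < l - 1) from by
        ext k
        simp only [hF, Finset.mem_filter, Finset.mem_univ, true_and]
        tauto]
      exact hcard
  have hfib : ∀ A ∈ 𝒜, (((univ : Finset (Equiv.Perm (Fin n))).filter fun π =>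
      π p0 = l0 ∧ ((univ : Finset (Fin n)).filter fun k : Fin n =>
        (k:ℕ) < i + j ∧ ((π k : Fin n):ℕ) < l - 1).card = i).filter fun π => F π = A).card
      = (l-1).factorial * (n-l).factorial := by
    intro A hA
    simp only [h𝒜, Finset.mem_filter, Finset.mem_univ, true_and] at hA
    obtain ⟨hAcard, hAp0, hAi⟩ := hA
    have heq : (((univ : Finset (Equiv.Perm (Fin n))).filter fun π =>
        π p0 = l0 ∧ ((univ : Finset (Fin n)).filter fun k : Fin n =>
          (k:ℕ) < i + j ∧ ((π k : Fin n):ℕ) < l - 1).card = i).filter fun π => F π = A)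
        = ((univ : Finset (Equiv.Perm (Fin n))).filter fun π =>
            π p0 = l0 ∧ ∀ k, ((π k : Fin n):ℕ) < (l0:ℕ) ↔ k ∈ A) := by
      ext π
      simp only [Finset.mem_filter, Finset.mem_univ, true_and, hl0v]
      constructor
      · rintro ⟨⟨hp, -⟩, hFA⟩
        refine ⟨hp, fun k => ?_⟩
        rw [← hFA]
        simp [hF]
      · rintro ⟨hp, hsm⟩
        have hFA : F π = A := by
          ext k
          simp [hF, hsm k]
        refine ⟨⟨hp, ?_⟩, hFA⟩
        rw [show ((univ : Finset (Fin n)).filter fun k : Fin n =>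
            (k:ℕ) < i + j ∧ ((π k : Fin n):ℕ) < l - 1)
          = A.filter (fun k : Fin n => (k:ℕ) < i + j) from ?_, hAi]
        ext k
        simp only [Finset.mem_filter, Finset.mem_univ, true_and, ← hsm k]
        tauto
    rw [heq, card_fiber l0 p0 A (by rw [hAcard, hl0v]) hAp0, hl0v,
      show n - (l - 1) - 1 = n - l by omega]
  rw [Finset.card_eq_sum_card_fiberwise hmap, Finset.sum_congr rfl hfib,
    Finset.sum_const, smul_eq_mul]
  -- card of 𝒜
  have h𝒜card : 𝒜.card = (i+j).choose i * (n-1-i-j).choose (l-1-i) := by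
    have hbij : 𝒜.card = ((((univ : Finset (Fin n)).filter fun k : Fin n =>
        (k:ℕ) < i + j).powersetCard i) ×ˢ
        (((univ : Finset (Fin n)).filter fun k : Fin n =>
          i + j < (k:ℕ)).powersetCard (l-1-i))).card := by
      refine Finset.card_bij'
        (fun A _ => (A.filter (fun k : Fin n => (k:ℕ) < i + j),
                     A.filter (fun k : Fin n => i + j < (k:ℕ))))
        (fun p _ => p.1 ∪ p.2) ?_ ?_ ?_ ?_
      · intro A hA
        simp only [h𝒜, Finset.mem_filter, Finset.mem_univ, true_and] at hA
        obtain ⟨hAcard, hAp0, hAi⟩ := hA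
        rw [Finset.mem_product, Finset.mem_powersetCard, Finset.mem_powersetCard]
        have hne : ∀ k ∈ A, (k:ℕ) ≠ i + j := by
          intro k hk hkv
          exact hAp0 (by rwa [show k = p0 from Fin.val_inj.mp (by rw [hkv, hp0v])] at hk)
        have hsplit : (A.filter fun k : Fin n => ¬ ((k:ℕ) < i + j))
            = A.filter (fun k : Fin n => i + j < (k:ℕ)) := by
          ext k
          simp only [Finset.mem_filter]
          constructor
          · rintro ⟨hk, h2⟩; exact ⟨hk, lt_of_le_of_ne (by omega) (Ne.symm (hne k hk))⟩
          · rintro ⟨hk, h2⟩; exact ⟨hk, by omega⟩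
        have hadd := Finset.card_filter_add_card_filter_not
          (s := A) (p := fun k : Fin n => (k:ℕ) < i + j)
        rw [hAi, hsplit] at hadd
        refine ⟨⟨?_, hAi⟩, ?_, ?_⟩
        · intro k hk; simp only [Finset.mem_filter] at hk ⊢
          exact ⟨Finset.mem_univ _, hk.2⟩
        · intro k hk; simp only [Finset.mem_filter] at hk ⊢
          exact ⟨Finset.mem_univ _, hk.2⟩
        · show (A.filter (fun k : Fin n => i + j < (k:ℕ))).card = l - 1 - i
          omega
      · intro p hp
        rw [Finset.mem_product, Finset.mem_powersetCard, Finset.mem_powersetCard] at hp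
        obtain ⟨⟨hs1, hc1⟩, hs2, hc2⟩ := hp
        have hmem1 : ∀ k ∈ p.1, (k:ℕ) < i + j := by
          intro k hk; have := hs1 hk; simp only [Finset.mem_filter] at this; exact this.2
        have hmem2 : ∀ k ∈ p.2, i + j < (k:ℕ) := by
          intro k hk; have := hs2 hk; simp only [Finset.mem_filter] at this; exact this.2
        have hdisj : Disjoint p.1 p.2 := by
          rw [Finset.disjoint_left]
          intro k hk1 hk2
          have := hmem1 k hk1; have := hmem2 k hk2; omega
        simp only [h𝒜, Finset.mem_filter, Finset.mem_univ, true_and]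
        refine ⟨?_, ?_, ?_⟩
        · rw [Finset.card_union_of_disjoint hdisj, hc1, hc2]; omega
        · intro hmem
          rcases Finset.mem_union.mp hmem with h | h
          · have := hmem1 _ h; rw [hp0v] at this; omega
          · have := hmem2 _ h; rw [hp0v] at this; omega
        · have e1 : (p.1 ∪ p.2).filter (fun k : Fin n => (k:ℕ) < i + j) = p.1 := by
            ext k
            simp only [Finset.mem_filter, Finset.mem_union]
            constructor
            · rintro ⟨h | h, h2⟩
              · exact h
              · have := hmem2 _ h; omega
            · intro h; exact ⟨Or.inl h, hmem1 _ h⟩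
          rw [e1, hc1]
      · intro A hA
        simp only [h𝒜, Finset.mem_filter, Finset.mem_univ, true_and] at hA
        obtain ⟨hAcard, hAp0, hAi⟩ := hA
        ext k
        simp only [Finset.mem_union, Finset.mem_filter]
        constructor
        · rintro (⟨h, -⟩ | ⟨h, -⟩) <;> exact h
        · intro hk
          have hne : (k:ℕ) ≠ i + j := by
            intro hkv
            exact hAp0 (by rwa [show k = p0 from Fin.val_inj.mp (by rw [hkv, hp0v])] at hk)
          rcases lt_or_gt_of_ne hne with h | h
          · exact Or.inl ⟨hk, h⟩
          · exact Or.inr ⟨hk, h⟩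
      · intro p hp
        rw [Finset.mem_product, Finset.mem_powersetCard, Finset.mem_powersetCard] at hp
        obtain ⟨⟨hs1, hc1⟩, hs2, hc2⟩ := hp
        have hmem1 : ∀ k ∈ p.1, (k:ℕ) < i + j := by
          intro k hk; have := hs1 hk; simp only [Finset.mem_filter] at this; exact this.2
        have hmem2 : ∀ k ∈ p.2, i + j < (k:ℕ) := by
          intro k hk; have := hs2 hk; simp only [Finset.mem_filter] at this; exact this.2
        have e1 : (p.1 ∪ p.2).filter (fun k : Fin n => (k:ℕ) < i + j) = p.1 := by
          ext k
          simp only [Finset.mem_filter, Finset.mem_union]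
          constructor
          · rintro ⟨h | h, h2⟩
            · exact h
            · have := hmem2 _ h; omega
          · intro h; exact ⟨Or.inl h, hmem1 _ h⟩
        have e2 : (p.1 ∪ p.2).filter (fun k : Fin n => i + j < (k:ℕ)) = p.2 := by
          ext k
          simp only [Finset.mem_filter, Finset.mem_union]
          constructor
          · rintro ⟨h | h, h2⟩
            · have := hmem1 _ h; omega
            · exact h
          · intro h; exact ⟨Or.inr h, hmem2 _ h⟩
        rw [Prod.ext_iff]
        exact ⟨e1, e2⟩
    rw [hbij, Finset.card_product, Finset.card_powersetCard, Finset.card_powersetCard,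
      card_val_lt n (i+j) (by omega), card_val_gt n (i+j),
      show n - (i + j) - 1 = n - 1 - i - j by omega]
  rw [h𝒜card]
  -- final algebra
  have hc3 : ((n-1).choose (l-1) : ℝ) ≠ 0 := by
    have := Nat.choose_pos (show l - 1 ≤ n - 1 by omega)
    positivity
  have hfac : ((n-1).choose (l-1) : ℝ) * ((l-1).factorial * (n-l).factorial)
      = ((n-1).factorial : ℝ) := by
    have h := Nat.choose_mul_factorial_mul_factorial (show l - 1 ≤ n - 1 by omega)
    rw [show n - 1 - (l - 1) = n - l by omega] at h
    exact_mod_cast (by rw [← h]; ring)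
  have hnfac : ((n : ℝ)) * ((n-1).factorial : ℝ) = (n.factorial : ℝ) := by
    have : n = (n - 1) + 1 := by omega
    rw [this, Nat.factorial_succ]
    push_cast
    ring
  have hn0 : (n : ℝ) ≠ 0 := by positivity
  push_cast
  rw [div_eq_div_iff (by positivity) (by positivity), ← hnfac]
  field_simp
  linear_combination (((i + j).choose i : ℝ) * ((n - 1 - i - j).choose (l - 1 - i))) * hfac
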